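/- Consider the eigenvalue problem (ψ^{(i)})'' = -κ² ψ^{(i)} on the four quarter-intervals I_1 = (0, π/2), I_2 = (π/2, π), I_3 = (π, 3π/2), I_4 = (3π/2, 2π) with transmission conditions ε₁ψ^{(1)}(0) = ε₄ψ^{(4)}(2π), (ψ^{(1)})'(0) = (ψ^{(4)})'(2π), ψ^{(1)}(π/2) = ψ^{(2)}(π/2), (ψ^{(1)})'(π/2) = (ψ^{(2)})'(π/2), ψ^{(2)}(π) = ψ^{(3)}(π), (ψ^{(2)})'(π) = (ψ^{(3)})'(π), ψ^{(3)}(3π/2) = ψ^{(4)}(3π/2), ε₁(ψ^{(3)})'(3π/2) = ε₄(ψ^{(4)})'(3π/2), where ε₁ = ε₂ = ε₃ ≠ ε₄ are positive constants. Then all eigenvalues κ² are strictly positive. -/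

import Mathlib

set_option maxHeartbeats 1000000

open MeasureTheory intervalIntegral Set

/-- Continuous nonneg function with zero integral vanishes on the interval. -/
lemma zero_of_integral_zero {f : ℝ → ℝ} (hf : Continuous f) {a b : ℝ} (hab : a < b)
    (hnn : ∀ x, 0 ≤ f x) (hz : ∫ x in a..b, f x = 0) : ∀ x ∈ Set.Icc a b, f x = 0 := by
  have hint : IntervalIntegrable f volume a b := hf.intervalIntegrable a b
  have hae : f =ᵐ[volume.restrict (Set.Ioc a b)] 0 := by
    refine (integral_eq_zero_iff_of_le_of_nonneg_ae hab.le ?_ hint).mp hz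
    exact Filter.Eventually.of_forall hnn
  rw [Measure.restrict_congr_set Ioc_ae_eq_Icc] at hae
  exact fun x hx => Measure.eqOn_Icc_of_ae_eq volume hab.ne hae hf.continuousOn
    continuousOn_const hx

lemma sq_integral_pos {f : ℝ → ℝ} (hf : Continuous f) {a b x₀ : ℝ} (hab : a < b)
    (hx : x₀ ∈ Set.Icc a b) (hfx : f x₀ ≠ 0) : 0 < ∫ x in a..b, (f x) ^ 2 := by
  have hnn : 0 ≤ ∫ x in a..b, (f x) ^ 2 :=
    intervalIntegral.integral_nonneg hab.le (fun x _ => sq_nonneg _)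
  rcases hnn.lt_or_eq with h | h
  · exact h
  · exfalso
    have := zero_of_integral_zero (by fun_prop) hab (fun x => sq_nonneg (f x)) h.symm x₀ hx
    exact hfx (pow_eq_zero_iff (n := 2) (by norm_num) |>.mp this)

/-- Energy identity on one interval. -/
lemma energy_identity {ψ : ℝ → ℝ} (hs : ContDiff ℝ 2 ψ) {a b : ℝ} (hab : a ≤ b) {κsq : ℝ}
    (hode : ∀ x ∈ Set.Icc a b, deriv (deriv ψ) x = -κsq * ψ x) :
    deriv ψ b * ψ b - deriv ψ a * ψ a
      = (∫ x in a..b, (deriv ψ x) ^ 2) - κsq * ∫ x in a..b, (ψ x) ^ 2 := by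
  have hs2 : ContDiff ℝ (1 + 1) ψ := by norm_num; exact hs
  have h1 : ContDiff ℝ 1 (deriv ψ) := (contDiff_succ_iff_deriv.mp hs2).2.2
  have hdiff : Differentiable ℝ ψ := hs.differentiable (by norm_num)
  have hdiff' : Differentiable ℝ (deriv ψ) := h1.differentiable (by norm_num)
  have hcψ : Continuous ψ := hs.continuous
  have hcd : Continuous (deriv ψ) := hdiff'.continuous
  have hcdd : Continuous (deriv (deriv ψ)) := h1.continuous_deriv le_rfl
  have key : ∫ x in a..b, (deriv (deriv ψ) x * ψ x + deriv ψ x * deriv ψ x)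
      = deriv ψ b * ψ b - deriv ψ a * ψ a := by
    apply intervalIntegral.integral_eq_sub_of_hasDerivAt
    · intro x _
      exact ((hdiff' x).hasDerivAt).mul ((hdiff x).hasDerivAt)
    · exact (Continuous.intervalIntegrable (by fun_prop) a b)
  have hcongr : ∫ x in a..b, (deriv (deriv ψ) x * ψ x + deriv ψ x * deriv ψ x)
      = ∫ x in a..b, ((deriv ψ x) ^ 2 - κsq * (ψ x) ^ 2) := by
    apply intervalIntegral.integral_congr
    intro x hx
    rw [Set.uIcc_of_le hab] at hx
    have := hode x hx
    simp only [this]; ring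
  rw [hcongr] at key
  rw [intervalIntegral.integral_sub (Continuous.intervalIntegrable (by fun_prop) a b)
    (Continuous.intervalIntegrable (by fun_prop) a b)] at key
  rw [intervalIntegral.integral_const_mul] at key
  linarith [key]

/-- From zero derivative on `[a,b]`, constancy. -/
lemma const_of_deriv_zero {ψ : ℝ → ℝ} (hdiff : Differentiable ℝ ψ) {a b : ℝ}
    (hd : ∀ x ∈ Set.Icc a b, deriv ψ x = 0) : ∀ x ∈ Set.Icc a b, ψ x = ψ a := by
  apply constant_of_has_deriv_right_zero (hdiff.continuous.continuousOn)
  intro x hx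
  have h0 : deriv ψ x = 0 := hd x ⟨hx.1, hx.2.le⟩
  have := (hdiff x).hasDerivAt
  rw [h0] at this
  exact this.hasDerivWithinAt

/-- All eigenvalues `κ²` of the eigenvalue problem
`ψ'' = -κ²ψ` on the four quarter-intervals of `(0, 2π)` with the stated transmission
conditions (piecewise constant weight `ε₁ = ε₂ = ε₃ ≠ ε₄`, all positive) are
strictly positive. -/
theorem stmt_7 (e1 e4 : ℝ) (he1 : 0 < e1) (he4 : 0 < e4) (hne : e1 ≠ e4)
    (κsq : ℝ) (ψ₁ ψ₂ ψ₃ ψ₄ : ℝ → ℝ)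
    (hs1 : ContDiff ℝ 2 ψ₁) (hs2 : ContDiff ℝ 2 ψ₂)
    (hs3 : ContDiff ℝ 2 ψ₃) (hs4 : ContDiff ℝ 2 ψ₄)
    (hode1 : ∀ x ∈ Set.Icc (0 : ℝ) (Real.pi/2), deriv (deriv ψ₁) x = -κsq * ψ₁ x)
    (hode2 : ∀ x ∈ Set.Icc (Real.pi/2) Real.pi, deriv (deriv ψ₂) x = -κsq * ψ₂ x)
    (hode3 : ∀ x ∈ Set.Icc Real.pi (3*Real.pi/2), deriv (deriv ψ₃) x = -κsq * ψ₃ x)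
    (hode4 : ∀ x ∈ Set.Icc (3*Real.pi/2) (2*Real.pi), deriv (deriv ψ₄) x = -κsq * ψ₄ x)
    (htr1 : e1 * ψ₁ 0 = e4 * ψ₄ (2*Real.pi))
    (htr2 : deriv ψ₁ 0 = deriv ψ₄ (2*Real.pi))
    (htr3 : ψ₁ (Real.pi/2) = ψ₂ (Real.pi/2))
    (htr4 : deriv ψ₁ (Real.pi/2) = deriv ψ₂ (Real.pi/2))
    (htr5 : ψ₂ Real.pi = ψ₃ Real.pi)
    (htr6 : deriv ψ₂ Real.pi = deriv ψ₃ Real.pi)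
    (htr7 : ψ₃ (3*Real.pi/2) = ψ₄ (3*Real.pi/2))
    (htr8 : e1 * deriv ψ₃ (3*Real.pi/2) = e4 * deriv ψ₄ (3*Real.pi/2))
    (hnt : ¬ ((∀ x ∈ Set.Icc (0 : ℝ) (Real.pi/2), ψ₁ x = 0) ∧
              (∀ x ∈ Set.Icc (Real.pi/2) Real.pi, ψ₂ x = 0) ∧
              (∀ x ∈ Set.Icc Real.pi (3*Real.pi/2), ψ₃ x = 0) ∧
              (∀ x ∈ Set.Icc (3*Real.pi/2) (2*Real.pi), ψ₄ x = 0))) :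
    0 < κsq := by
  have hπ : (0:ℝ) < Real.pi := Real.pi_pos
  have h1 : (0:ℝ) < Real.pi/2 := by linarith
  have h2 : Real.pi/2 < Real.pi := by linarith
  have h3 : Real.pi < 3*Real.pi/2 := by linarith
  have h4 : 3*Real.pi/2 < 2*Real.pi := by linarith
  -- energy identities
  have E1 := energy_identity hs1 h1.le hode1
  have E2 := energy_identity hs2 h2.le hode2
  have E3 := energy_identity hs3 h3.le hode3
  have E4 := energy_identity hs4 h4.le hode4
  set T1 := ∫ x in (0:ℝ)..(Real.pi/2), (deriv ψ₁ x) ^ 2 with hT1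
  set T2 := ∫ x in (Real.pi/2)..Real.pi, (deriv ψ₂ x) ^ 2 with hT2
  set T3 := ∫ x in Real.pi..(3*Real.pi/2), (deriv ψ₃ x) ^ 2 with hT3
  set T4 := ∫ x in (3*Real.pi/2)..(2*Real.pi), (deriv ψ₄ x) ^ 2 with hT4
  set S1 := ∫ x in (0:ℝ)..(Real.pi/2), (ψ₁ x) ^ 2 with hS1
  set S2 := ∫ x in (Real.pi/2)..Real.pi, (ψ₂ x) ^ 2 with hS2
  set S3 := ∫ x in Real.pi..(3*Real.pi/2), (ψ₃ x) ^ 2 with hS3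
  set S4 := ∫ x in (3*Real.pi/2)..(2*Real.pi), (ψ₄ x) ^ 2 with hS4
  -- boundary terms cancel
  have hmain : e1 * T1 + e1 * T2 + e1 * T3 + e4 * T4
      = κsq * (e1 * S1 + e1 * S2 + e1 * S3 + e4 * S4) := by
    have comb : e1 * (deriv ψ₁ (Real.pi/2) * ψ₁ (Real.pi/2) - deriv ψ₁ 0 * ψ₁ 0)
        + e1 * (deriv ψ₂ Real.pi * ψ₂ Real.pi - deriv ψ₂ (Real.pi/2) * ψ₂ (Real.pi/2))
        + e1 * (deriv ψ₃ (3*Real.pi/2) * ψ₃ (3*Real.pi/2) - deriv ψ₃ Real.pi * ψ₃ Real.pi)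
        + e4 * (deriv ψ₄ (2*Real.pi) * ψ₄ (2*Real.pi)
            - deriv ψ₄ (3*Real.pi/2) * ψ₄ (3*Real.pi/2)) = 0 := by
      linear_combination (e1 * deriv ψ₂ (Real.pi/2)) * htr3 + (e1 * ψ₁ (Real.pi/2)) * htr4
        + (e1 * deriv ψ₃ Real.pi) * htr5 + (e1 * ψ₂ Real.pi) * htr6
        + (e4 * deriv ψ₄ (3*Real.pi/2)) * htr7 + (ψ₃ (3*Real.pi/2)) * htr8
        - (deriv ψ₁ 0) * htr1 - (e4 * ψ₄ (2*Real.pi)) * htr2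
    linear_combination comb - e1 * E1 - e1 * E2 - e1 * E3 - e4 * E4
  -- S positive
  have Snn1 : 0 ≤ S1 := intervalIntegral.integral_nonneg h1.le (fun x _ => sq_nonneg _)
  have Snn2 : 0 ≤ S2 := intervalIntegral.integral_nonneg h2.le (fun x _ => sq_nonneg _)
  have Snn3 : 0 ≤ S3 := intervalIntegral.integral_nonneg h3.le (fun x _ => sq_nonneg _)
  have Snn4 : 0 ≤ S4 := intervalIntegral.integral_nonneg h4.le (fun x _ => sq_nonneg _)
  have Tnn1 : 0 ≤ T1 := intervalIntegral.integral_nonneg h1.le (fun x _ => sq_nonneg _)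
  have Tnn2 : 0 ≤ T2 := intervalIntegral.integral_nonneg h2.le (fun x _ => sq_nonneg _)
  have Tnn3 : 0 ≤ T3 := intervalIntegral.integral_nonneg h3.le (fun x _ => sq_nonneg _)
  have Tnn4 : 0 ≤ T4 := intervalIntegral.integral_nonneg h4.le (fun x _ => sq_nonneg _)
  push_neg at hnt
  have Spos : 0 < e1 * S1 + e1 * S2 + e1 * S3 + e4 * S4 := by
    by_cases c1 : ∀ x ∈ Set.Icc (0:ℝ) (Real.pi/2), ψ₁ x = 0
    · by_cases c2 : ∀ x ∈ Set.Icc (Real.pi/2) Real.pi, ψ₂ x = 0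
      · by_cases c3 : ∀ x ∈ Set.Icc Real.pi (3*Real.pi/2), ψ₃ x = 0
        · obtain ⟨x₀, hx₀, hne₀⟩ := hnt c1 c2 c3
          have := sq_integral_pos hs4.continuous h4 hx₀ hne₀
          nlinarith
        · push_neg at c3
          obtain ⟨x₀, hx₀, hne₀⟩ := c3
          have := sq_integral_pos hs3.continuous h3 hx₀ hne₀
          nlinarith
      · push_neg at c2
        obtain ⟨x₀, hx₀, hne₀⟩ := c2
        have := sq_integral_pos hs2.continuous h2 hx₀ hne₀
        nlinarith
    · push_neg at c1
      obtain ⟨x₀, hx₀, hne₀⟩ := c1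
      have := sq_integral_pos hs1.continuous h1 hx₀ hne₀
      nlinarith
  -- κsq ≥ 0
  have p1 : 0 ≤ e1 * T1 := mul_nonneg he1.le Tnn1
  have p2 : 0 ≤ e1 * T2 := mul_nonneg he1.le Tnn2
  have p3 : 0 ≤ e1 * T3 := mul_nonneg he1.le Tnn3
  have p4 : 0 ≤ e4 * T4 := mul_nonneg he4.le Tnn4
  rcases lt_trichotomy κsq 0 with hneg | hzero | hpos
  · exfalso
    have hlt := mul_neg_of_neg_of_pos hneg Spos
    linarith [hmain, p1, p2, p3, p4]
  · exfalso
    -- all T's vanish, ψ's constant, constant is zero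
    subst hzero
    have hTsum : e1 * T1 + e1 * T2 + e1 * T3 + e4 * T4 = 0 := by linarith [hmain]
    have hT1z : T1 = 0 := (mul_eq_zero.mp (by linarith : e1 * T1 = 0)).resolve_left he1.ne'
    have hT2z : T2 = 0 := (mul_eq_zero.mp (by linarith : e1 * T2 = 0)).resolve_left he1.ne'
    have hT3z : T3 = 0 := (mul_eq_zero.mp (by linarith : e1 * T3 = 0)).resolve_left he1.ne'
    have hT4z : T4 = 0 := (mul_eq_zero.mp (by linarith : e4 * T4 = 0)).resolve_left he4.ne'
    have hd1 : Differentiable ℝ ψ₁ := hs1.differentiable (by norm_num)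
    have hd2 : Differentiable ℝ ψ₂ := hs2.differentiable (by norm_num)
    have hd3 : Differentiable ℝ ψ₃ := hs3.differentiable (by norm_num)
    have hd4 : Differentiable ℝ ψ₄ := hs4.differentiable (by norm_num)
    have hc1 : Continuous (deriv ψ₁) := hs1.continuous_deriv (by norm_num)
    have hc2 : Continuous (deriv ψ₂) := hs2.continuous_deriv (by norm_num)
    have hc3 : Continuous (deriv ψ₃) := hs3.continuous_deriv (by norm_num)
    have hc4 : Continuous (deriv ψ₄) := hs4.continuous_deriv (by norm_num)
    have hz1 : ∀ x ∈ Set.Icc (0:ℝ) (Real.pi/2), deriv ψ₁ x = 0 := by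
      intro x hx
      have := zero_of_integral_zero (by fun_prop) h1 (fun x => sq_nonneg (deriv ψ₁ x)) hT1z x hx
      exact pow_eq_zero_iff (n := 2) (by norm_num) |>.mp this
    have hz2 : ∀ x ∈ Set.Icc (Real.pi/2) Real.pi, deriv ψ₂ x = 0 := by
      intro x hx
      have := zero_of_integral_zero (by fun_prop) h2 (fun x => sq_nonneg (deriv ψ₂ x)) hT2z x hx
      exact pow_eq_zero_iff (n := 2) (by norm_num) |>.mp this
    have hz3 : ∀ x ∈ Set.Icc Real.pi (3*Real.pi/2), deriv ψ₃ x = 0 := by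
      intro x hx
      have := zero_of_integral_zero (by fun_prop) h3 (fun x => sq_nonneg (deriv ψ₃ x)) hT3z x hx
      exact pow_eq_zero_iff (n := 2) (by norm_num) |>.mp this
    have hz4 : ∀ x ∈ Set.Icc (3*Real.pi/2) (2*Real.pi), deriv ψ₄ x = 0 := by
      intro x hx
      have := zero_of_integral_zero (by fun_prop) h4 (fun x => sq_nonneg (deriv ψ₄ x)) hT4z x hx
      exact pow_eq_zero_iff (n := 2) (by norm_num) |>.mp this
    have hk1 := const_of_deriv_zero hd1 hz1
    have hk2 := const_of_deriv_zero hd2 hz2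
    have hk3 := const_of_deriv_zero hd3 hz3
    have hk4 := const_of_deriv_zero hd4 hz4
    -- all constants equal ψ₁ 0
    have e12 : ψ₂ (Real.pi/2) = ψ₁ 0 := by
      rw [← htr3]; exact hk1 _ ⟨h1.le, le_refl _⟩
    have e23 : ψ₃ Real.pi = ψ₁ 0 := by
      rw [← htr5, hk2 _ ⟨h2.le, le_refl _⟩, e12]
    have e34 : ψ₄ (3*Real.pi/2) = ψ₁ 0 := by
      rw [← htr7, hk3 _ ⟨h3.le, le_refl _⟩, e23]
    have e4e : ψ₄ (2*Real.pi) = ψ₁ 0 := by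
      rw [hk4 _ ⟨h4.le, le_refl _⟩]; exact e34
    have hc0 : ψ₁ 0 = 0 := by
      rw [e4e] at htr1
      have h0 : (e1 - e4) * ψ₁ 0 = 0 := by linarith [htr1]
      rcases mul_eq_zero.mp h0 with h | h
      · exact absurd (sub_eq_zero.mp h) hne
      · exact h
    -- contradiction with nontriviality
    obtain ⟨x₀, hx₀, hne₀⟩ := hnt
      (fun x hx => by rw [hk1 x hx, hc0])
      (fun x hx => by rw [hk2 x hx, e12, hc0])
      (fun x hx => by rw [hk3 x hx, e23, hc0])
    exact hne₀ (by rw [hk4 x₀ hx₀, e34, hc0])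
  · exact hpos
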